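/- For all global variables f, g : Ω → ℝ̄, every real λ ≥ 0, every real μ, and every situation s, the game-theoretic upper expectation satisfies: (V1) E_V(f|s) ≤ sup_{ω∈Γ(s)} f(ω); (V2) E_V(f+g|s) ≤ E_V(f|s) + E_V(g|s); (V3) E_V(λ·f|s) = λ·E_V(f|s); (V4) if f(ω) ≤ g(ω) for all ω ∈ Γ(s) then E_V(f|s) ≤ E_V(g|s); (V5) inf_{ω∈Γ(s)} f(ω) ≤ −E_V(−f|s) ≤ E_V(f|s) ≤ sup_{ω∈Γ(s)} f(ω); (V6) E_V(f+μ|s) = E_V(f|s) + μ. -/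

import Mathlib

open Filter Topology

noncomputable section

/-- Addition on the extended reals with the convention `(+∞) + (−∞) = (−∞) + (+∞) = +∞`. -/
def eadd (a b : EReal) : EReal := if a = ⊤ ∨ b = ⊤ then ⊤ else a + b

/-- An extended real variable is bounded below. -/
def BddBelowF {Y : Type*} (f : Y → EReal) : Prop := ∃ M : ℝ, ∀ y, (M : EReal) ≤ f y

/-- (E1): constants are preserved. -/
def UE1 {Y : Type*} (E : (Y → EReal) → EReal) : Prop :=
  ∀ c : ℝ, E (fun _ => (c : EReal)) = (c : EReal)

/-- (E2): sub-additivity on bounded below variables. -/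
def UE2 {Y : Type*} (E : (Y → EReal) → EReal) : Prop :=
  ∀ f g : Y → EReal, BddBelowF f → BddBelowF g →
    E (fun y => eadd (f y) (g y)) ≤ eadd (E f) (E g)

/-- (E3): positive homogeneity on bounded below variables. -/
def UE3 {Y : Type*} (E : (Y → EReal) → EReal) : Prop :=
  ∀ l : ℝ, 0 < l → ∀ f : Y → EReal, BddBelowF f →
    E (fun y => (l : EReal) * f y) = (l : EReal) * E f

/-- (E4): monotonicity on bounded below variables. -/
def UE4 {Y : Type*} (E : (Y → EReal) → EReal) : Prop :=
  ∀ f g : Y → EReal, BddBelowF f → BddBelowF g → (∀ y, f y ≤ g y) → E f ≤ E g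

/-- (E5): continuity with respect to non-decreasing sequences of non-negative variables. -/
def UE5 {Y : Type*} (E : (Y → EReal) → EReal) : Prop :=
  ∀ (fs : ℕ → Y → EReal) (f : Y → EReal),
    (∀ n y, 0 ≤ fs n y) → (∀ n y, fs n y ≤ fs (n + 1) y) →
    (∀ y, Tendsto (fun n => fs n y) atTop (𝓝 (f y))) →
    Tendsto (fun n => E (fs n)) atTop (𝓝 (E f))

/-- An upper expectation: a map satisfying (E1)–(E5). -/
def IsUpperExpectation {Y : Type*} (E : (Y → EReal) → EReal) : Prop :=
  UE1 E ∧ UE2 E ∧ UE3 E ∧ UE4 E ∧ UE5 E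

/-- The situation formed by the first `n` states of the path `ω`. -/
def pfx {X : Type*} (ω : ℕ → X) (n : ℕ) : List X := List.ofFn (fun i : Fin n => ω i)

/-- The cylinder event of all paths that go through the situation `s`. -/
def Gamma {X : Type*} (s : List X) : Set (ℕ → X) := {ω | pfx ω s.length = s}

/-- A process is bounded below. -/
def BddBelowP {X : Type*} (M : List X → EReal) : Prop := ∃ B : ℝ, ∀ t, (B : EReal) ≤ M t

/-- A supermartingale for the imprecise probabilities tree `Q`. -/
def IsSupermartingale {X : Type*} (Q : List X → (X → EReal) → EReal)
    (M : List X → EReal) : Prop :=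
  ∀ s : List X, Q s (fun x => M (s ++ [x])) ≤ M s

/-- The pathwise limit inferior of a process. -/
def liminfP {X : Type*} (M : List X → EReal) (ω : ℕ → X) : EReal :=
  Filter.liminf (fun n => M (pfx ω n)) atTop

/-- The game-theoretic upper expectation `E_V(f | s)`. -/
def upExp {X : Type*} (Q : List X → (X → EReal) → EReal)
    (f : (ℕ → X) → EReal) (s : List X) : EReal :=
  sInf {x : EReal | ∃ M : List X → EReal, IsSupermartingale Q M ∧ BddBelowP M ∧
    (∀ ω ∈ Gamma s, f ω ≤ liminfP M ω) ∧ M s = x}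

/-- An event `A` is strictly almost sure within `Γ(s)`: some `s`-test supermartingale
converges to `+∞` on every path of `Γ(s)` outside `A`. -/
def StrictlyAS {X : Type*} (Q : List X → (X → EReal) → EReal) (s : List X)
    (A : Set (ℕ → X)) : Prop :=
  ∃ T : List X → EReal, IsSupermartingale Q T ∧ (∀ t, 0 ≤ T t) ∧ T s = 1 ∧
    ∀ ω ∈ Gamma s, ω ∉ A → Tendsto (fun n => T (pfx ω n)) atTop (𝓝 (⊤ : EReal))

/-- An `n`-measurable global variable only depends on the first `n` states. -/
def NMeasurable {X : Type*} (n : ℕ) (f : (ℕ → X) → EReal) : Prop :=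
  ∀ ω ω' : ℕ → X, pfx ω n = pfx ω' n → f ω = f ω'

/-- A finitary global variable is `n`-measurable for some `n`. -/
def Finitary {X : Type*} (f : (ℕ → X) → EReal) : Prop := ∃ n : ℕ, NMeasurable n f

/-- The bounded below global variables that are pointwise limits of finitary variables. -/
def VbLim {X : Type*} : Set ((ℕ → X) → EReal) :=
  {f | BddBelowF f ∧ ∃ gs : ℕ → (ℕ → X) → EReal, (∀ n, Finitary (gs n)) ∧
    ∀ ω, Tendsto (fun n => gs n ω) atTop (𝓝 (f ω))}

section Stmt5Aux

open Filter

/-! ### Basic facts about `eadd` -/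

lemma eadd_mono {a b c d : EReal} (h1 : a ≤ c) (h2 : b ≤ d) : eadd a b ≤ eadd c d := by
  by_cases h : c = ⊤ ∨ d = ⊤
  · simp [eadd, h]
  · push_neg at h
    rw [eadd, if_neg, eadd, if_neg (by tauto)]
    · exact add_le_add h1 h2
    · push_neg
      exact ⟨(h1.trans_lt h.1.lt_top).ne, (h2.trans_lt h.2.lt_top).ne⟩

lemma eadd_eq_add {a b : EReal} (ha : a ≠ ⊥) (hb : b ≠ ⊥) : eadd a b = a + b := by
  rcases eq_or_ne a ⊤ with rfl | haT
  · rw [eadd, if_pos (Or.inl rfl), EReal.top_add_of_ne_bot hb]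
  · rcases eq_or_ne b ⊤ with rfl | hbT
    · rw [eadd, if_pos (Or.inr rfl), EReal.add_top_of_ne_bot ha]
    · rw [eadd, if_neg (by tauto)]

lemma zero_le_eadd_neg (a : EReal) : 0 ≤ eadd a (-a) := by
  induction a with
  | bot => simp [eadd]
  | coe x =>
    rw [eadd, if_neg (by simp), ← EReal.coe_neg, ← EReal.coe_add, add_neg_cancel]
    exact le_rfl
  | top => simp [eadd]

/-! ### Basic consequences of the upper-expectation axioms -/

lemma ue_coe_le {Y : Type*} {E : (Y → EReal) → EReal} (hE : IsUpperExpectation E)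
    {g : Y → EReal} {B : ℝ} (hB : ∀ y, (B : EReal) ≤ g y) : (B : EReal) ≤ E g := by
  have := hE.2.2.2.1 (fun _ => (B : EReal)) g ⟨B, fun _ => le_rfl⟩ ⟨B, hB⟩ hB
  rwa [hE.1 B] at this

lemma ue_ne_bot {Y : Type*} {E : (Y → EReal) → EReal} (hE : IsUpperExpectation E)
    {g : Y → EReal} {B : ℝ} (hB : ∀ y, (B : EReal) ≤ g y) : E g ≠ ⊥ :=
  ((EReal.bot_lt_coe B).trans_le (ue_coe_le hE hB)).ne'

/-- On a finite nonempty space, an upper expectation dominates the value at some point. -/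
lemma ue_exists_le {Y : Type*} [Finite Y] [Nonempty Y] {E : (Y → EReal) → EReal}
    (hE : IsUpperExpectation E) {g : Y → EReal} (hg : BddBelowF g) :
    ∃ x, g x ≤ E g := by
  obtain ⟨B, hB⟩ := hg
  obtain ⟨x₀, hx₀⟩ := Finite.exists_min g
  refine ⟨x₀, ?_⟩
  by_cases hT : g x₀ = ⊤
  · have htop : E g = ⊤ := by
      by_contra h
      obtain ⟨y, hy1, hy2⟩ := EReal.exists_between_coe_real (Ne.lt_top h)
      have hy3 : (y : EReal) ≤ E g := by
        have := hE.2.2.2.1 (fun _ => (y : EReal)) g ⟨y, fun _ => le_rfl⟩ ⟨B, hB⟩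
          (fun z => by have hz := top_le_iff.1 (hT ▸ hx₀ z); simp only [hz]; exact le_top)
        rwa [hE.1 y] at this
      exact absurd hy3 (not_le.2 hy1)
    rw [hT, htop]
  · have hBb : g x₀ ≠ ⊥ := fun h => by simpa [h] using hB x₀
    have hr : ((g x₀).toReal : EReal) = g x₀ := EReal.coe_toReal hT hBb
    have := hE.2.2.2.1 (fun _ => ((g x₀).toReal : EReal)) g
      ⟨(g x₀).toReal, fun _ => le_rfl⟩ ⟨B, hB⟩ (fun z => hr.le.trans (hx₀ z))
    rw [hE.1 ((g x₀).toReal)] at this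
    exact hr.ge.trans this

/-! ### Paths -/

lemma gamma_nonempty {X : Type*} [Nonempty X] (s : List X) : ∃ ω, ω ∈ Gamma s := by
  classical
  refine ⟨fun i => s.getD i (Classical.arbitrary X), ?_⟩
  show pfx _ s.length = s
  apply List.ext_getElem (by simp [pfx])
  intro i h1 h2
  simp only [pfx, List.getElem_ofFn]
  exact List.getD_eq_getElem s _ h2

lemma mem_gamma_iff {X : Type*} {s : List X} {ω : ℕ → X} :
    ω ∈ Gamma s ↔ pfx ω s.length = s := Iff.rfl

/-- Along some path through `s`, a bounded-below supermartingale never exceeds its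
value at `s`; in particular its liminf there is at most `M s`. -/
lemma exists_path {X : Type*} [Fintype X] [Nonempty X]
    {Q : List X → (X → EReal) → EReal} (hQ : ∀ s : List X, IsUpperExpectation (Q s))
    {M : List X → EReal} (hM : IsSupermartingale Q M) (hb : BddBelowP M) (s : List X) :
    ∃ ω ∈ Gamma s, liminfP M ω ≤ M s := by
  classical
  obtain ⟨B, hB⟩ := hb
  have hstep : ∀ t : List X, ∃ x : X, M (t ++ [x]) ≤ M t := by
    intro t
    obtain ⟨x, hx⟩ := ue_exists_le (hQ t) (g := fun x => M (t ++ [x])) ⟨B, fun x => hB _⟩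
    exact ⟨x, hx.trans (hM t)⟩
  choose step hstepspec using hstep
  obtain ⟨L, hL0, hLsucc⟩ : ∃ L : ℕ → List X, L 0 = s ∧
      ∀ n, L (n + 1) = L n ++ [step (L n)] :=
    ⟨fun n => (Nat.rec s (fun _ ih => ih ++ [step ih]) n : List X), rfl, fun n => rfl⟩
  have hlen : ∀ n, (L n).length = s.length + n := by
    intro n
    induction n with
    | zero => rw [hL0]; omega
    | succ n ih => rw [hLsucc, List.length_append, ih, List.length_singleton]; omega
  have hMle : ∀ n, M (L n) ≤ M s := by
    intro n
    induction n with
    | zero => rw [hL0]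
    | succ n ih => rw [hLsucc]; exact (hstepspec (L n)).trans ih
  have hpre : ∀ m n, m ≤ n → L m <+: L n := by
    intro m n h
    induction n, h using Nat.le_induction with
    | base => exact List.prefix_refl _
    | succ n hn ih => exact ih.trans (by rw [hLsucc]; exact List.prefix_append _ _)
  have hlt : ∀ i : ℕ, i < (L (i + 1)).length := fun i => by rw [hlen]; omega
  set ω : ℕ → X := fun i => (L (i + 1))[i]'(hlt i) with hω
  have hpfx : ∀ n, pfx ω (s.length + n) = L n := by
    intro n
    apply List.ext_getElem (by simp [pfx, hlen])
    intro i h1 h2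
    simp only [pfx, List.getElem_ofFn]
    show (L (i + 1))[i]'(hlt i) = (L n)[i]
    rcases le_total (i + 1) n with h | h
    · exact (hpre _ _ h).getElem (hlt i)
    · exact ((hpre _ _ h).getElem h2).symm
  refine ⟨ω, ?_, ?_⟩
  · show pfx ω s.length = s
    have := hpfx 0
    rwa [Nat.add_zero, hL0] at this
  · apply Filter.liminf_le_of_frequently_le'
    rw [frequently_atTop]
    intro N
    exact ⟨s.length + N, Nat.le_add_left _ _, by rw [hpfx N]; exact hMle N⟩

/-! ### Basic facts about `upExp` -/

lemma upExp_le {X : Type*} {Q : List X → (X → EReal) → EReal}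
    {f : (ℕ → X) → EReal} {s : List X} {M : List X → EReal}
    (h1 : IsSupermartingale Q M) (h2 : BddBelowP M)
    (h3 : ∀ ω ∈ Gamma s, f ω ≤ liminfP M ω) : upExp Q f s ≤ M s :=
  sInf_le ⟨M, h1, h2, h3, rfl⟩

lemma biInf_le_upExp {X : Type*} [Fintype X] [Nonempty X]
    {Q : List X → (X → EReal) → EReal} (hQ : ∀ s : List X, IsUpperExpectation (Q s))
    (f : (ℕ → X) → EReal) (s : List X) :
    (⨅ ω ∈ Gamma s, f ω) ≤ upExp Q f s := by
  apply le_sInf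
  rintro x ⟨M, h1, h2, h3, rfl⟩
  obtain ⟨ω, hω, hlim⟩ := exists_path hQ h1 h2 s
  exact (iInf₂_le ω hω).trans ((h3 ω hω).trans hlim)

lemma upExp_mono {X : Type*} {Q : List X → (X → EReal) → EReal}
    {f g : (ℕ → X) → EReal} {s : List X} (h : ∀ ω ∈ Gamma s, f ω ≤ g ω) :
    upExp Q f s ≤ upExp Q g s := by
  apply sInf_le_sInf
  rintro x ⟨M, h1, h2, h3, rfl⟩
  exact ⟨M, h1, h2, fun ω hω => (h ω hω).trans (h3 ω hω), rfl⟩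

lemma upExp_le_coe {X : Type*} {Q : List X → (X → EReal) → EReal}
    (hQ : ∀ s : List X, IsUpperExpectation (Q s))
    {f : (ℕ → X) → EReal} {s : List X} {c : ℝ} (h : ∀ ω ∈ Gamma s, f ω ≤ (c : EReal)) :
    upExp Q f s ≤ (c : EReal) := by
  have := upExp_le (Q := Q) (f := f) (s := s) (M := fun _ => (c : EReal))
    (fun t => le_of_eq ((hQ t).1 c)) ⟨c, fun _ => le_rfl⟩
    (fun ω hω => by simpa [liminfP, Filter.liminf_const] using h ω hω)
  exact this

lemma upExp_le_biSup {X : Type*} {Q : List X → (X → EReal) → EReal}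
    (hQ : ∀ s : List X, IsUpperExpectation (Q s))
    (f : (ℕ → X) → EReal) (s : List X) :
    upExp Q f s ≤ ⨆ ω ∈ Gamma s, f ω := by
  refine le_of_forall_gt_imp_ge_of_dense fun d hd => ?_
  obtain ⟨c, hc1, hc2⟩ := EReal.exists_between_coe_real hd
  refine le_trans (upExp_le_coe hQ fun ω hω => ?_) hc2.le
  exact (le_iSup₂ (f := fun (ω : ℕ → X) (_ : ω ∈ Gamma s) => f ω) ω hω).trans hc1.le

lemma upExp_const {X : Type*} [Fintype X] [Nonempty X]
    {Q : List X → (X → EReal) → EReal} (hQ : ∀ s : List X, IsUpperExpectation (Q s))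
    (s : List X) (c : ℝ) : upExp Q (fun _ => (c : EReal)) s = (c : EReal) := by
  refine le_antisymm (upExp_le_coe hQ fun _ _ => le_rfl) ?_
  obtain ⟨ω₀, hω₀⟩ := gamma_nonempty s
  refine le_trans ?_ (biInf_le_upExp hQ _ s)
  exact le_iInf₂ fun ω hω => le_rfl


/-! ### Multiplication by a positive real as an order isomorphism -/

def mulOrderIso (c : ℝ) (hc : 0 < c) : EReal ≃o EReal where
  toFun x := (c : EReal) * x
  invFun x := ((c⁻¹ : ℝ) : EReal) * x
  left_inv x := by
    show ((c⁻¹ : ℝ) : EReal) * ((c : EReal) * x) = x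
    rw [← mul_assoc, ← EReal.coe_mul, inv_mul_cancel₀ hc.ne', EReal.coe_one, one_mul]
  right_inv x := by
    show ((c : ℝ) : EReal) * (((c⁻¹ : ℝ) : EReal) * x) = x
    rw [← mul_assoc, ← EReal.coe_mul, mul_inv_cancel₀ hc.ne', EReal.coe_one, one_mul]
  map_rel_iff' := by
    intro a b
    simp only [Equiv.coe_fn_mk]
    constructor
    · intro h
      have h2 := mul_le_mul_of_nonneg_left h
        (EReal.coe_nonneg.2 (inv_nonneg.2 hc.le) : (0 : EReal) ≤ ((c⁻¹ : ℝ) : EReal))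
      simpa only [← mul_assoc, ← EReal.coe_mul, inv_mul_cancel₀ hc.ne', EReal.coe_one,
        one_mul] using h2
    · intro h
      exact mul_le_mul_of_nonneg_left h (EReal.coe_nonneg.2 hc.le)

lemma liminfP_const_mul {X : Type*} (c : ℝ) (hc : 0 < c) (M : List X → EReal) (ω : ℕ → X) :
    liminfP (fun t => (c : EReal) * M t) ω = (c : EReal) * liminfP M ω := by
  have h := OrderIso.liminf_apply (mulOrderIso c hc)
    (f := atTop) (u := fun n => M (pfx ω n))
  exact h.symm

/-! ### Scaling and shifting upExp -/

lemma upExp_smul_le {X : Type*} {Q : List X → (X → EReal) → EReal}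
    (hQ : ∀ s : List X, IsUpperExpectation (Q s)) (c : ℝ) (hc : 0 < c)
    (f : (ℕ → X) → EReal) (s : List X) :
    upExp Q (fun ω => (c : EReal) * f ω) s ≤ (c : EReal) * upExp Q f s := by
  have hc' : (0 : EReal) < (c : EReal) := EReal.coe_pos.2 hc
  rw [← EReal.div_le_iff_le_mul hc' (EReal.coe_ne_top c)]
  apply le_sInf
  rintro x ⟨M, h1, h2, h3, rfl⟩
  rw [EReal.div_le_iff_le_mul hc' (EReal.coe_ne_top c)]
  obtain ⟨B, hB⟩ := h2
  refine upExp_le (M := fun t => (c : EReal) * M t) ?_ ?_ ?_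
  · intro t
    have hE3 := (hQ t).2.2.1 c hc (fun x => M (t ++ [x])) ⟨B, fun x => hB _⟩
    calc Q t (fun x => (c : EReal) * M (t ++ [x]))
        = (c : EReal) * Q t (fun x => M (t ++ [x])) := hE3
      _ ≤ (c : EReal) * M t := mul_le_mul_of_nonneg_left (h1 t) (EReal.coe_nonneg.2 hc.le)
  · exact ⟨c * B, fun t => by
      rw [EReal.coe_mul]; exact mul_le_mul_of_nonneg_left (hB t) (EReal.coe_nonneg.2 hc.le)⟩
  · intro ω hω
    rw [liminfP_const_mul c hc]
    exact mul_le_mul_of_nonneg_left (h3 ω hω) (EReal.coe_nonneg.2 hc.le)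

lemma upExp_smul {X : Type*} {Q : List X → (X → EReal) → EReal}
    (hQ : ∀ s : List X, IsUpperExpectation (Q s)) (c : ℝ) (hc : 0 < c)
    (f : (ℕ → X) → EReal) (s : List X) :
    upExp Q (fun ω => (c : EReal) * f ω) s = (c : EReal) * upExp Q f s := by
  refine le_antisymm (upExp_smul_le hQ c hc f s) ?_
  have h2 := upExp_smul_le hQ c⁻¹ (inv_pos.2 hc) (fun ω => (c : EReal) * f ω) s
  have hfun : (fun ω => ((c⁻¹ : ℝ) : EReal) * ((c : EReal) * f ω)) = f :=
    funext fun ω => by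
      rw [← mul_assoc, ← EReal.coe_mul, inv_mul_cancel₀ hc.ne', EReal.coe_one, one_mul]
  rw [hfun] at h2
  calc (c : EReal) * upExp Q f s
      ≤ (c : EReal) * (((c⁻¹ : ℝ) : EReal) * upExp Q (fun ω => (c : EReal) * f ω) s) :=
        mul_le_mul_of_nonneg_left h2 (EReal.coe_nonneg.2 hc.le)
    _ = upExp Q (fun ω => (c : EReal) * f ω) s := by
        rw [← mul_assoc, ← EReal.coe_mul, mul_inv_cancel₀ hc.ne', EReal.coe_one, one_mul]

lemma upExp_add_const_le {X : Type*} {Q : List X → (X → EReal) → EReal}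
    (hQ : ∀ s : List X, IsUpperExpectation (Q s)) (c : ℝ)
    (f : (ℕ → X) → EReal) (s : List X) :
    upExp Q (fun ω => f ω + (c : EReal)) s ≤ upExp Q f s + (c : EReal) := by
  rw [← EReal.sub_le_iff_le_add (Or.inl (EReal.coe_ne_bot c)) (Or.inl (EReal.coe_ne_top c))]
  apply le_sInf
  rintro x ⟨M, h1, h2, h3, rfl⟩
  rw [EReal.sub_le_iff_le_add (Or.inl (EReal.coe_ne_bot c)) (Or.inl (EReal.coe_ne_top c))]
  obtain ⟨B, hB⟩ := h2
  have hMnb : ∀ t, M t ≠ ⊥ := fun t => ((EReal.bot_lt_coe B).trans_le (hB t)).ne'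
  refine upExp_le (M := fun t => M t + (c : EReal)) ?_ ?_ ?_
  · intro t
    have heq : (fun x => M (t ++ [x]) + (c : EReal))
        = fun x => eadd (M (t ++ [x])) ((c : EReal)) :=
      funext fun x => (eadd_eq_add (hMnb _) (EReal.coe_ne_bot c)).symm
    rw [heq]
    refine ((hQ t).2.1 (fun x => M (t ++ [x])) (fun _ => (c : EReal))
      ⟨B, fun x => hB _⟩ ⟨c, fun _ => le_rfl⟩).trans ?_
    rw [(hQ t).1 c,
      eadd_eq_add (ue_ne_bot (hQ t) (fun x => hB (t ++ [x]))) (EReal.coe_ne_bot c)]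
    exact add_le_add_left (h1 t) _
  · exact ⟨B + c, fun t => by rw [EReal.coe_add]; exact add_le_add_left (hB t) _⟩
  · intro ω hω
    have hlim : liminfP M ω + (c : EReal) ≤ liminfP (fun t => M t + (c : EReal)) ω := by
      have h := EReal.le_liminf_add (f := atTop) (u := fun n => M (pfx ω n))
        (v := fun _ => (c : EReal))
      simpa [liminfP, Filter.liminf_const, Pi.add_def] using h
    exact (add_le_add_left (h3 ω hω) _).trans hlim

end Stmt5Aux

/-- coherence properties (V1)–(V6) of the game-theoretic upper expectation,
where sums use the convention `(+∞) + (−∞) = +∞`. -/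
theorem stmt5 {X : Type*} [Fintype X] [Nonempty X]
    (Q : List X → (X → EReal) → EReal) (hQ : ∀ s : List X, IsUpperExpectation (Q s))
    (f g : (ℕ → X) → EReal) (l : ℝ) (hl : 0 ≤ l) (μ : ℝ) (s : List X) :
    (upExp Q f s ≤ ⨆ ω ∈ Gamma s, f ω) ∧
    (upExp Q (fun ω => eadd (f ω) (g ω)) s ≤ eadd (upExp Q f s) (upExp Q g s)) ∧
    (upExp Q (fun ω => (l : EReal) * f ω) s = (l : EReal) * upExp Q f s) ∧
    ((∀ ω ∈ Gamma s, f ω ≤ g ω) → upExp Q f s ≤ upExp Q g s) ∧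
    ((⨅ ω ∈ Gamma s, f ω) ≤ -upExp Q (fun ω => -f ω) s ∧
      -upExp Q (fun ω => -f ω) s ≤ upExp Q f s ∧
      upExp Q f s ≤ ⨆ ω ∈ Gamma s, f ω) ∧
    (upExp Q (fun ω => f ω + (μ : EReal)) s = upExp Q f s + (μ : EReal)) := by
  have V1 : ∀ h : (ℕ → X) → EReal, upExp Q h s ≤ ⨆ ω ∈ Gamma s, h ω :=
    fun h => upExp_le_biSup hQ h s
  have V2 : ∀ h k : (ℕ → X) → EReal,
      upExp Q (fun ω => eadd (h ω) (k ω)) s ≤ eadd (upExp Q h s) (upExp Q k s) := by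
    intro h k
    by_cases hh : upExp Q h s = ⊤
    · rw [eadd, if_pos (Or.inl hh)]; exact le_top
    by_cases hk : upExp Q k s = ⊤
    · rw [eadd, if_pos (Or.inr hk)]; exact le_top
    rw [eadd, if_neg (by tauto)]
    refine EReal.le_add_of_forall_gt (Or.inr hk) (Or.inl hh) fun a ha b hb => ?_
    obtain ⟨x, ⟨M, hM1, hM2, hM3, rfl⟩, hxa⟩ := sInf_lt_iff.1 ha
    obtain ⟨y, ⟨N, hN1, hN2, hN3, rfl⟩, hyb⟩ := sInf_lt_iff.1 hb
    obtain ⟨BM, hBM⟩ := hM2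
    obtain ⟨BN, hBN⟩ := hN2
    have hMnb : ∀ t, M t ≠ ⊥ := fun t => ((EReal.bot_lt_coe BM).trans_le (hBM t)).ne'
    have hNnb : ∀ t, N t ≠ ⊥ := fun t => ((EReal.bot_lt_coe BN).trans_le (hBN t)).ne'
    refine le_trans (upExp_le (M := fun t => M t + N t) ?_ ?_ ?_)
      (add_le_add hxa.le hyb.le)
    · intro t
      have heq : (fun x => M (t ++ [x]) + N (t ++ [x]))
          = fun x => eadd (M (t ++ [x])) (N (t ++ [x])) :=
        funext fun x => (eadd_eq_add (hMnb _) (hNnb _)).symm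
      rw [heq]
      refine ((hQ t).2.1 _ _ ⟨BM, fun x => hBM _⟩ ⟨BN, fun x => hBN _⟩).trans ?_
      rw [eadd_eq_add (ue_ne_bot (hQ t) (fun x => hBM (t ++ [x])))
        (ue_ne_bot (hQ t) (fun x => hBN (t ++ [x])))]
      exact add_le_add (hM1 t) (hN1 t)
    · exact ⟨BM + BN, fun t => by rw [EReal.coe_add]; exact add_le_add (hBM t) (hBN t)⟩
    · intro ω hω
      have hlM : ((BM : ℝ) : EReal) ≤ liminfP M ω :=
        le_liminf_of_le (h := Eventually.of_forall fun n => hBM _)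
      have hlN : ((BN : ℝ) : EReal) ≤ liminfP N ω :=
        le_liminf_of_le (h := Eventually.of_forall fun n => hBN _)
      have h1 : eadd (h ω) (k ω) ≤ eadd (liminfP M ω) (liminfP N ω) :=
        eadd_mono (hM3 ω hω) (hN3 ω hω)
      have h2 : eadd (liminfP M ω) (liminfP N ω) = liminfP M ω + liminfP N ω :=
        eadd_eq_add ((EReal.bot_lt_coe BM).trans_le hlM).ne'
          ((EReal.bot_lt_coe BN).trans_le hlN).ne'
      refine h1.trans (h2.le.trans ?_)
      have h3 := EReal.le_liminf_add (f := atTop) (u := fun n => M (pfx ω n))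
        (v := fun n => N (pfx ω n))
      simpa [liminfP, Pi.add_apply, Pi.add_def] using h3
  have V3 : upExp Q (fun ω => (l : EReal) * f ω) s = (l : EReal) * upExp Q f s := by
    rcases hl.eq_or_lt with heq | hlt
    · rw [← heq]
      simp only [EReal.coe_zero, zero_mul]
      simpa using upExp_const hQ s 0
    · exact upExp_smul hQ l hlt f s
  have V6 : upExp Q (fun ω => f ω + (μ : EReal)) s = upExp Q f s + (μ : EReal) := by
    refine le_antisymm (upExp_add_const_le hQ μ f s) ?_
    have h2 := upExp_add_const_le hQ (-μ) (fun ω => f ω + (μ : EReal)) s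
    have hfun : (fun ω => (f ω + (μ : EReal)) + ((-μ : ℝ) : EReal)) = f :=
      funext fun ω => by
        rw [add_assoc, ← EReal.coe_add, add_neg_cancel, EReal.coe_zero, add_zero]
    rw [hfun] at h2
    have h3 := add_le_add_left h2 ((μ : ℝ) : EReal)
    rwa [add_assoc, ← EReal.coe_add, neg_add_cancel, EReal.coe_zero, add_zero] at h3
  have V5a : (⨅ ω ∈ Gamma s, f ω) ≤ -upExp Q (fun ω => -f ω) s := by
    have h1 : upExp Q (fun ω => -f ω) s ≤ -(⨅ ω ∈ Gamma s, f ω) := by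
      refine (V1 _).trans ?_
      refine iSup₂_le fun ω hω => ?_
      exact EReal.neg_le_neg_iff.2 (iInf₂_le ω hω)
    exact EReal.le_neg_of_le_neg h1
  have hzero : upExp Q (fun _ => (0 : EReal)) s = 0 := by simpa using upExp_const hQ s 0
  have V5b : -upExp Q (fun ω => -f ω) s ≤ upExp Q f s := by
    have h0 : (0 : EReal) ≤ eadd (upExp Q f s) (upExp Q (fun ω => -f ω) s) := by
      have hm : upExp Q (fun _ => (0 : EReal)) s ≤ upExp Q (fun ω => eadd (f ω) (-f ω)) s :=
        upExp_mono (fun ω _ => zero_le_eadd_neg (f ω))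
      rw [hzero] at hm
      exact hm.trans (V2 f (fun ω => -f ω))
    by_cases hnf : upExp Q (fun ω => -f ω) s = ⊤
    · rw [hnf]; simp
    by_cases hf : upExp Q f s = ⊤
    · rw [hf]; exact le_top
    rw [eadd, if_neg (by tauto)] at h0
    have hnb : upExp Q (fun ω => -f ω) s ≠ ⊥ := by
      intro hbot
      rw [hbot, EReal.add_bot] at h0
      simp at h0
    obtain ⟨r, hr⟩ : ∃ r : ℝ, upExp Q (fun ω => -f ω) s = (r : EReal) :=
      ⟨_, (EReal.coe_toReal hnf hnb).symm⟩
    rw [hr] at h0 ⊢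
    rw [show -((r : ℝ) : EReal) = (0 : EReal) - (r : EReal) by rw [sub_eq_add_neg, zero_add]]
    rw [EReal.sub_le_iff_le_add (Or.inl (EReal.coe_ne_bot r)) (Or.inl (EReal.coe_ne_top r))]
    exact h0
  exact ⟨V1 f, V2 f g, V3, fun h => upExp_mono h, ⟨V5a, V5b, V1 f⟩, V6⟩
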